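/- Density optimality, minimal cardinality (Theorem 1): Let c : Fin λ → ℝ≥0 and k : ℝ≥0. Suppose R : Finset (Fin λ) satisfies: (i) for every b ∈ R and every b' ∉ R, c b' ≤ c b (R consists of blocks of highest density); (ii) ∑_{b ∈ R} c b ≥ k; and (iii) there exists b₀ ∈ R with c b₀ ≤ c b for all b ∈ R and ∑_{b ∈ R.erase b₀} c b < k (R stops as soon as k records are guaranteed). Then every S : Finset (Fin λ) with ∑_{b ∈ S} c b ≥ k satisfies R.card ≤ S.card. -/

import Mathlib

/-- Density optimality, minimal cardinality (Theorem 1): if `R` consists of blocks of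
highest density, has total count at least `k`, and stops as soon as `k` records are
guaranteed, then `R` has minimal cardinality among all block sets with total count
at least `k`. -/
theorem density_optimal_min_card {lam : ℕ} (c : Fin lam → NNReal) (k : NNReal)
    (R : Finset (Fin lam))
    (h_top : ∀ b ∈ R, ∀ b' ∉ R, c b' ≤ c b)
    (h_ge : k ≤ ∑ b ∈ R, c b)
    (h_stop : ∃ b₀ ∈ R, (∀ b ∈ R, c b₀ ≤ c b) ∧ ∑ b ∈ R.erase b₀, c b < k) :
    ∀ S : Finset (Fin lam), k ≤ ∑ b ∈ S, c b → R.card ≤ S.card := by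
  intro S hS
  by_contra hcard
  push_neg at hcard
  obtain ⟨b₀, hb₀R, hmin, hlt⟩ := h_stop
  set A := S ∩ R with hA
  set B := S \ R with hB
  have hAsubR : A ⊆ R := Finset.inter_subset_right
  have hsum_split : ∑ b ∈ A, c b + ∑ b ∈ B, c b = ∑ b ∈ S, c b :=
    Finset.sum_inter_add_sum_sdiff S R c
  have hcard_split : A.card + B.card = S.card := by
    have h := Finset.card_filter_add_card_filter_not (s := S) (p := fun x => x ∈ R)
    simpa [hA, hB, Finset.inter_comm, Finset.sdiff_eq_filter, Finset.filter_mem_eq_inter] using h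
  have hRA : A.card + (R \ A).card = R.card := by
    rw [Finset.card_sdiff_of_subset hAsubR]
    omega
  have hBle : B.card ≤ (R \ A).card := by omega
  obtain ⟨T, hTsub, hTcard⟩ := Finset.exists_subset_card_eq hBle
  have hTsubR : T ⊆ R := hTsub.trans Finset.sdiff_subset
  -- sum over B ≤ B.card • c b₀ ≤ sum over T
  have hB_le : ∑ b ∈ B, c b ≤ ∑ b ∈ T, c b := by
    calc ∑ b ∈ B, c b ≤ B.card • c b₀ := by
          apply Finset.sum_le_card_nsmul
          intro x hx
          exact h_top b₀ hb₀R x (Finset.mem_sdiff.mp hx).2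
      _ = T.card • c b₀ := by rw [hTcard]
      _ ≤ ∑ b ∈ T, c b := by
          apply Finset.card_nsmul_le_sum
          intro x hx
          exact hmin x (hTsubR hx)
  set U := A ∪ T with hU
  have hdisj : Disjoint A T := by
    refine Finset.disjoint_left.mpr fun x hxA hxT => ?_
    exact (Finset.mem_sdiff.mp (hTsub hxT)).2 hxA
  have hUsubR : U ⊆ R := Finset.union_subset hAsubR hTsubR
  have hUcard : U.card = S.card := by
    rw [hU, Finset.card_union_of_disjoint hdisj, hTcard]
    omega
  have hS_le_U : ∑ b ∈ S, c b ≤ ∑ b ∈ U, c b := by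
    rw [hU, Finset.sum_union hdisj, ← hsum_split]
    exact add_le_add_right hB_le _
  -- pick x ∈ R \ U
  have hUx : ∃ x ∈ R, x ∉ U := by
    by_contra h
    push_neg at h
    have : R ⊆ U := h
    have := Finset.card_le_card this
    omega
  obtain ⟨x, hxR, hxU⟩ := hUx
  have hins : ∑ b ∈ U, c b + c x ≤ ∑ b ∈ R, c b := by
    have : ∑ b ∈ insert x U, c b ≤ ∑ b ∈ R, c b :=
      Finset.sum_le_sum_of_subset (Finset.insert_subset hxR hUsubR)
    rwa [Finset.sum_insert hxU, add_comm] at this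
  have hRsum : ∑ b ∈ R.erase b₀, c b + c b₀ = ∑ b ∈ R, c b :=
    Finset.sum_erase_add R c hb₀R
  have hU_le : ∑ b ∈ U, c b ≤ ∑ b ∈ R.erase b₀, c b := by
    have h1 : ∑ b ∈ U, c b + c b₀ ≤ ∑ b ∈ R.erase b₀, c b + c b₀ := by
      calc ∑ b ∈ U, c b + c b₀ ≤ ∑ b ∈ U, c b + c x :=
            add_le_add_right (hmin x hxR) _
        _ ≤ ∑ b ∈ R, c b := hins
        _ = ∑ b ∈ R.erase b₀, c b + c b₀ := hRsum.symm
    exact le_of_add_le_add_right h1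
  have : k < k := lt_of_le_of_lt (hS.trans (hS_le_U.trans hU_le)) hlt
  exact lt_irrefl k this
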